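/- Let R = k[x_1, x_2] and R^{S_2} the subring of symmetric polynomials, B = R ⊗_{R^{S_2}} R. Then B ⊗_R B is isomorphic as an (R,R)-bimodule to B ⊕ B. Explicitly, the map B ⊗_R B → B ⊕ B sending a⊗b⊗c ↦ (a·m(b)·c in first coordinate where m is multiplication composed appropriately, and a⊗∂(b)·c in the second, with ∂ the Demazure operator ∂(b) = (b − s_1 b)/(x_1 − x_2)) is an isomorphism of (R,R)-bimodules. -/

import Mathlib

open MvPolynomial Polynomial TensorProduct
set_option synthInstance.maxHeartbeats 4000000
set_option maxHeartbeats 4000000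

section Aux

variable (k : Type*) [Field k]

local notation "RR" => MvPolynomial (Fin 2) k
local notation "SS" => MvPolynomial.symmetricSubalgebra (Fin 2) k

noncomputable def auxMul : (RR ⊗[SS] RR) →ₗ[RR] RR :=
  TensorProduct.AlgebraTensorModule.lift
    { toFun := fun a => a • (LinearMap.id : RR →ₗ[SS] RR)
      map_add' := fun a b => by simp [add_smul]
      map_smul' := fun r a => by simp [mul_smul] }

noncomputable def auxBeta (D : RR →ₗ[SS] RR) : (RR ⊗[SS] RR) →ₗ[SS] RR :=
  TensorProduct.lift
    { toFun := fun b => LinearMap.mul SS RR (D b)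
      map_add' := fun a b => by simp
      map_smul' := fun r a => by simp }

noncomputable def eFwd (D : RR →ₗ[SS] RR) :
    ((RR ⊗[SS] RR) ⊗[SS] RR) →ₗ[RR] (RR ⊗[SS] RR) × (RR ⊗[SS] RR) :=
  (TensorProduct.AlgebraTensorModule.map (auxMul k) LinearMap.id).prod
    ((TensorProduct.AlgebraTensorModule.map LinearMap.id (auxBeta k D)) ∘ₗ
      (TensorProduct.AlgebraTensorModule.assoc SS SS RR RR RR RR).toLinearMap)

@[simp] theorem eFwd_tmul (D : RR →ₗ[SS] RR) (a b c : RR) :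
    eFwd k D ((a ⊗ₜ b) ⊗ₜ c) = ((a * b) ⊗ₜ c, a ⊗ₜ (D b * c)) := rfl

noncomputable def phiAux : (RR ⊗[SS] RR) →ₗ[RR] ((RR ⊗[SS] RR) ⊗[SS] RR) :=
  TensorProduct.AlgebraTensorModule.lift
    { toFun := fun a => TensorProduct.mk SS (RR ⊗[SS] RR) RR (a ⊗ₜ 1)
      map_add' := fun a b => by ext c; simp [add_tmul]; rfl
      map_smul' := fun r a => by ext c; rfl }

noncomputable def psiAux : (RR ⊗[SS] RR) →ₗ[RR] ((RR ⊗[SS] RR) ⊗[SS] RR) :=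
  TensorProduct.AlgebraTensorModule.lift
    { toFun := fun a => TensorProduct.mk SS (RR ⊗[SS] RR) RR (a ⊗ₜ (MvPolynomial.X 0 : RR))
        + (-1 : SS) • TensorProduct.mk SS (RR ⊗[SS] RR) RR ((a * (MvPolynomial.X 0 : RR)) ⊗ₜ 1)
      map_add' := fun a b => by ext c; erw [LinearMap.add_apply, LinearMap.add_apply]; simp [add_tmul, add_mul]; abel
      map_smul' := fun r a => by ext c; erw [LinearMap.smul_apply, LinearMap.add_apply]; simp [smul_tmul', mul_assoc]; rw [smul_comm r]; rfl }

noncomputable def gInv :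
    ((RR ⊗[SS] RR) × (RR ⊗[SS] RR)) →ₗ[RR] ((RR ⊗[SS] RR) ⊗[SS] RR) :=
  (phiAux k) ∘ₗ (LinearMap.fst RR _ _) + (psiAux k) ∘ₗ (LinearMap.snd RR _ _)

@[simp] theorem gInv_apply (u v : RR ⊗[SS] RR) :
    gInv k (u, v) = phiAux k u + psiAux k v := rfl

@[simp] theorem phiAux_tmul (a b : RR) :
    phiAux k (a ⊗ₜ b) = (a ⊗ₜ 1) ⊗ₜ b := rfl

@[simp] theorem psiAux_tmul (a b : RR) :
    psiAux k (a ⊗ₜ b) = (a ⊗ₜ (MvPolynomial.X 0 : RR)) ⊗ₜ b - ((a * (MvPolynomial.X 0 : RR)) ⊗ₜ 1) ⊗ₜ b := by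
  erw [TensorProduct.AlgebraTensorModule.lift_tmul]; erw [LinearMap.add_apply, LinearMap.smul_apply]; rw [sub_eq_add_neg]; congr 1
  rw [eq_neg_iff_add_eq_zero]
  calc (-1 : SS) • ((a * (MvPolynomial.X 0 : RR)) ⊗ₜ[SS] (1 : RR)) ⊗ₜ[SS] b + ((a * (MvPolynomial.X 0 : RR)) ⊗ₜ[SS] (1 : RR)) ⊗ₜ[SS] b
      = (-1 : SS) • ((a * (MvPolynomial.X 0 : RR)) ⊗ₜ[SS] (1 : RR)) ⊗ₜ[SS] b + (1 : SS) • ((a * (MvPolynomial.X 0 : RR)) ⊗ₜ[SS] (1 : RR)) ⊗ₜ[SS] b := by rw [one_smul]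
    _ = ((-1 : SS) + 1) • ((a * (MvPolynomial.X 0 : RR)) ⊗ₜ[SS] (1 : RR)) ⊗ₜ[SS] b := (add_smul _ _ _).symm
    _ = 0 := by rw [neg_add_cancel, zero_smul]

end Aux

theorem B_tensor_B_decomposition (k : Type*) [Field k] (hk : ringChar k ≠ 2)
    (D : MvPolynomial (Fin 2) k →ₗ[MvPolynomial.symmetricSubalgebra (Fin 2) k]
      MvPolynomial (Fin 2) k)
    (hD : ∀ b : MvPolynomial (Fin 2) k,
      (MvPolynomial.X 0 - MvPolynomial.X 1) * D b =
        b - MvPolynomial.rename (Equiv.swap (0 : Fin 2) 1) b)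
    (hD1 : D 1 = 0) (hDx : D (MvPolynomial.X 0) = 1) :
    ∃ e : ((MvPolynomial (Fin 2) k ⊗[MvPolynomial.symmetricSubalgebra (Fin 2) k]
            MvPolynomial (Fin 2) k) ⊗[MvPolynomial.symmetricSubalgebra (Fin 2) k]
            MvPolynomial (Fin 2) k)
          ≃ₗ[MvPolynomial (Fin 2) k]
          ((MvPolynomial (Fin 2) k ⊗[MvPolynomial.symmetricSubalgebra (Fin 2) k]
            MvPolynomial (Fin 2) k) ×
           (MvPolynomial (Fin 2) k ⊗[MvPolynomial.symmetricSubalgebra (Fin 2) k]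
            MvPolynomial (Fin 2) k)),
      ∀ a b c : MvPolynomial (Fin 2) k,
        e ((a ⊗ₜ b) ⊗ₜ c) = ((a * b) ⊗ₜ c, a ⊗ₜ (D b * c)) := by
  refine ⟨LinearEquiv.ofLinear (eFwd k D) (gInv k) ?_ ?_, fun a b c => rfl⟩
  · ext u v
    · simp [hD1]
    · simp [hD1]
    · simp [hD1, hDx]
    · simp [hD1, hDx]
  · -- key identity
    have hswap2 : ∀ p : MvPolynomial (Fin 2) k,
        MvPolynomial.rename (Equiv.swap (0 : Fin 2) 1)
          (MvPolynomial.rename (Equiv.swap (0 : Fin 2) 1) p) = p := fun p => by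
      rw [MvPolynomial.rename_rename]
      rw [show (⇑(Equiv.swap (0 : Fin 2) 1) ∘ ⇑(Equiv.swap (0 : Fin 2) 1)) = id from
        funext fun x => Equiv.swap_apply_self _ _ x, MvPolynomial.rename_id, AlgHom.id_apply]
    have hXne : (MvPolynomial.X (0 : Fin 2) : MvPolynomial (Fin 2) k) - MvPolynomial.X 1 ≠ 0 :=
      sub_ne_zero.mpr (MvPolynomial.X_injective.ne (by decide))
    have hDsym : ∀ b : MvPolynomial (Fin 2) k,
        MvPolynomial.rename (Equiv.swap (0 : Fin 2) 1) (D b) = D b := by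
      intro b
      refine mul_left_cancel₀ hXne ?_
      have h2 := congrArg (MvPolynomial.rename (Equiv.swap (0 : Fin 2) 1)) (hD b)
      simp only [map_mul, map_sub, MvPolynomial.rename_X, Equiv.swap_apply_left,
        Equiv.swap_apply_right, hswap2] at h2
      linear_combination -h2 - hD b
    have hmem : ∀ x : MvPolynomial (Fin 2) k,
        MvPolynomial.rename (Equiv.swap (0 : Fin 2) 1) x = x →
          x ∈ MvPolynomial.symmetricSubalgebra (Fin 2) k := by
      intro x hx
      rw [MvPolynomial.mem_symmetricSubalgebra]
      intro e
      have he : (⇑e : Fin 2 → Fin 2) = id ∨ (⇑e : Fin 2 → Fin 2) = ⇑(Equiv.swap (0 : Fin 2) 1) := by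
        have hinj : e 1 ≠ e 0 := e.injective.ne (by decide)
        by_cases h0 : e 0 = 0
        · left; funext y; fin_cases y
          · simpa using h0
          · have : e 1 = 1 := by omega
            simpa using this
        · right; funext y; fin_cases y
          · have : e 0 = 1 := by omega
            simpa using this
          · have h00 : e 0 = 1 := by omega
            have : e 1 = 0 := by omega
            simpa using this
      rcases he with h | h
      · show MvPolynomial.rename (⇑e) x = x
        rw [h, MvPolynomial.rename_id, AlgHom.id_apply]
      · show MvPolynomial.rename (⇑e) x = x
        rw [h]; exact hx
    ext a b
    simp only [TensorProduct.AlgebraTensorModule.curry_apply, TensorProduct.curry_apply,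
      LinearMap.coe_restrictScalars, LinearMap.coe_comp, Function.comp_apply, eFwd_tmul,
      gInv_apply, phiAux_tmul, psiAux_tmul, LinearMap.id_coe, id_eq]
    -- decompose a = p + q * X 0 with p q symmetric
    obtain ⟨q, hq⟩ : ∃ q : MvPolynomial.symmetricSubalgebra (Fin 2) k,
        (q : MvPolynomial (Fin 2) k) = D a := ⟨⟨D a, hmem _ (hDsym a)⟩, rfl⟩
    have hpmem : a - D a * MvPolynomial.X 0 ∈ MvPolynomial.symmetricSubalgebra (Fin 2) k := by
      refine hmem _ ?_
      simp only [map_sub, map_mul, hDsym a, MvPolynomial.rename_X, Equiv.swap_apply_left]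
      linear_combination hD a
    obtain ⟨p, hp⟩ : ∃ p : MvPolynomial.symmetricSubalgebra (Fin 2) k,
        (p : MvPolynomial (Fin 2) k) = a - D a * MvPolynomial.X 0 := ⟨⟨_, hpmem⟩, rfl⟩
    have hsm : ∀ (s : MvPolynomial.symmetricSubalgebra (Fin 2) k) (x : MvPolynomial (Fin 2) k),
        (s : MvPolynomial (Fin 2) k) * x = s • x := fun s x => rfl
    have hb : a = (p : MvPolynomial (Fin 2) k) + (q : MvPolynomial (Fin 2) k) * MvPolynomial.X 0 := by
      rw [hp, hq]; ring
    rw [← hq, hb]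
    have e1 : (1 : MvPolynomial (Fin 2) k) *
        ((p : MvPolynomial (Fin 2) k) + (q : MvPolynomial (Fin 2) k) * MvPolynomial.X 0) =
        p • (1 : MvPolynomial (Fin 2) k) + q • ((1 : MvPolynomial (Fin 2) k) * MvPolynomial.X 0) := by
      rw [← hsm, ← hsm]; ring
    have e2 : ((q : MvPolynomial (Fin 2) k) * b) = q • b := hsm q b
    have e3 : ((p : MvPolynomial (Fin 2) k) + (q : MvPolynomial (Fin 2) k) * MvPolynomial.X 0)
        = p • (1 : MvPolynomial (Fin 2) k) + q • (MvPolynomial.X 0 : MvPolynomial (Fin 2) k) := by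
      rw [← hsm, ← hsm]; ring
    rw [e1, e2, e3]
    simp only [one_mul]
    simp only [add_tmul]
    simp only [tmul_add]
    simp only [← smul_tmul']
    have hmv : ∀ (s : MvPolynomial.symmetricSubalgebra (Fin 2) k)
        (u : MvPolynomial (Fin 2) k ⊗[MvPolynomial.symmetricSubalgebra (Fin 2) k]
          MvPolynomial (Fin 2) k) (y : MvPolynomial (Fin 2) k),
        u ⊗ₜ[MvPolynomial.symmetricSubalgebra (Fin 2) k] (s • y)
          = s • (u ⊗ₜ[MvPolynomial.symmetricSubalgebra (Fin 2) k] y) :=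
      fun s u y => (smul_tmul s u y).symm.trans (smul_tmul' s u y).symm
    have hmv2 : ∀ (s : MvPolynomial.symmetricSubalgebra (Fin 2) k) (y : MvPolynomial (Fin 2) k),
        (1 : MvPolynomial (Fin 2) k) ⊗ₜ[MvPolynomial.symmetricSubalgebra (Fin 2) k] (s • y)
          = s • ((1 : MvPolynomial (Fin 2) k) ⊗ₜ[MvPolynomial.symmetricSubalgebra (Fin 2) k] y) :=
      fun s y => (smul_tmul s 1 y).symm.trans (smul_tmul' s 1 y).symm
    rw [hmv q (1 ⊗ₜ MvPolynomial.X 0) b, hmv q (MvPolynomial.X 0 ⊗ₜ 1) b,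
      hmv2 p 1, hmv2 q (MvPolynomial.X 0)]
    simp only [add_tmul, ← smul_tmul']
    erw [← smul_tmul' p, ← smul_tmul' q]
    rw [add_assoc]; congr 1
    exact add_sub_cancel (G := (MvPolynomial (Fin 2) k ⊗[MvPolynomial.symmetricSubalgebra (Fin 2) k]
      MvPolynomial (Fin 2) k) ⊗[MvPolynomial.symmetricSubalgebra (Fin 2) k] MvPolynomial (Fin 2) k) _ _
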